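/- arXiv:2407.03660 — 2 statements merged into one kernel-verified Lean document; each statement's English description precedes it below -/
import Mathlib

section
/- Let F be a number field of degree d = r₁ + 2r₂ with discriminant absolute value D, and let ζ_F be its Dedekind zeta function. For any integer k, defining Λ_{F,k}(s) = D^s (2π)^{-ds} Γ(s)^d ζ_F(s) ζ_F(s+2k+1), one has Λ_{F,k}(s) = (-1)^{k r₁ + r₂} Λ_{F,k}(-s - 2k) for all complex s where both sides are defined. -/
open Complex

private lemma cpow_exp_log' {x : ℝ} (hx : 0 < x) (z : ℂ) :
    (x : ℂ) ^ z = Complex.exp ((Real.log x : ℂ) * z) := by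
  rw [Complex.cpow_def_of_ne_zero (by exact_mod_cast hx.ne' : (x:ℂ) ≠ 0),
    Complex.ofReal_log hx.le]

private lemma sin_shift' (x : ℂ) (n : ℤ) :
    Complex.sin (x + (n : ℂ) * (Real.pi : ℂ)) = (-1) ^ n * Complex.sin x := by
  have h1 : Complex.cos ((n:ℂ) * (Real.pi:ℂ)) = (-1) ^ n := by
    rw [show ((n:ℂ) * (Real.pi:ℂ)) = ((n * Real.pi : ℝ) : ℂ) by push_cast; ring,
      ← Complex.ofReal_cos,
      show Real.cos (n * Real.pi) = (-1) ^ n by simpa using Real.cos_int_mul_pi_sub 0 n]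
    push_cast
    ring
  have h2 : Complex.sin ((n:ℂ) * (Real.pi:ℂ)) = 0 := by
    rw [show ((n:ℂ) * (Real.pi:ℂ)) = ((n * Real.pi : ℝ) : ℂ) by push_cast; ring,
      ← Complex.ofReal_sin, Real.sin_int_mul_pi]
    simp
  rw [Complex.sin_add, h1, h2]
  ring

/-- Number field analogue of the Chandrasekharan–Narasimhan identity.
`F` is a number field of degree `d = r₁ + 2r₂` with `|disc| = D`, and `ζF` denotes the
meromorphically continued Dedekind zeta function, characterized here by its completed
functional equation `Ω_F(s) = Ω_F(1-s)` away from the integers. For any integer `k`,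
`Λ_{F,k}(s) = D^s (2π)^{-ds} Γ(s)^d ζ_F(s) ζ_F(s+2k+1)` satisfies
`Λ_{F,k}(s) = (-1)^{k r₁ + r₂} Λ_{F,k}(-s-2k)`. -/
theorem lambda_functional_equation_numberField
    (r₁ r₂ : ℕ) (D : ℝ) (hD : 0 < D) (ζF : ℂ → ℂ)
    (hfe : ∀ s : ℂ, (∀ n : ℤ, s ≠ (n : ℂ)) →
      ((D : ℂ) / ((Real.pi : ℂ) ^ (r₁ + 2 * r₂) * 4 ^ r₂)) ^ (s / 2) *
          Complex.Gamma (s / 2) ^ r₁ * Complex.Gamma s ^ r₂ * ζF s =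
        ((D : ℂ) / ((Real.pi : ℂ) ^ (r₁ + 2 * r₂) * 4 ^ r₂)) ^ ((1 - s) / 2) *
          Complex.Gamma ((1 - s) / 2) ^ r₁ * Complex.Gamma (1 - s) ^ r₂ * ζF (1 - s))
    (k : ℤ) (Λ : ℂ → ℂ)
    (hΛ : ∀ s : ℂ, Λ s = (D : ℂ) ^ s * (2 * (Real.pi : ℂ)) ^ (-((r₁ + 2 * r₂ : ℕ) : ℂ) * s) *
      Complex.Gamma s ^ (r₁ + 2 * r₂) * ζF s * ζF (s + 2 * k + 1))
    (s : ℂ) (hs : ∀ n : ℤ, s ≠ (n : ℂ)) :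
    Λ s = (-1 : ℂ) ^ (k * r₁ + r₂) * Λ (-s - 2 * k) := by
  have hπne : (Real.pi : ℂ) ≠ 0 := by exact_mod_cast Real.pi_ne_zero
  have hΓne : ∀ z : ℂ, (∀ n : ℤ, z ≠ (n : ℂ)) → Complex.Gamma z ≠ 0 := fun z h =>
    Complex.Gamma_ne_zero (fun m => by simpa using h (-(m : ℤ)))
  set w : ℂ := -s - 2 * (k : ℂ) with hw
  -- non-integrality facts
  have hsw : ∀ n : ℤ, w ≠ (n : ℂ) := by
    intro n h
    apply hs (-n - 2 * k)
    rw [hw] at h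
    push_cast
    linear_combination -h
  have hne_s2 : ∀ n : ℤ, s / 2 ≠ (n : ℂ) := fun n h =>
    hs (2 * n) (by push_cast; linear_combination 2 * h)
  have hne_sp1 : ∀ n : ℤ, (s + 1) / 2 ≠ (n : ℂ) := fun n h =>
    hs (2 * n - 1) (by push_cast; linear_combination 2 * h)
  have hne_1ms2 : ∀ n : ℤ, (1 - s) / 2 ≠ (n : ℂ) := fun n h =>
    hs (1 - 2 * n) (by push_cast; linear_combination -(2 * h))
  have hne_1ms : ∀ n : ℤ, 1 - s ≠ (n : ℂ) := fun n h =>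
    hs (1 - n) (by push_cast; linear_combination -h)
  have hne_w2 : ∀ n : ℤ, w / 2 ≠ (n : ℂ) := fun n h =>
    hs (-2 * n - 2 * k) (by rw [hw] at h; push_cast; linear_combination -(2 * h))
  have hne_wp1 : ∀ n : ℤ, (w + 1) / 2 ≠ (n : ℂ) := fun n h =>
    hs (1 - 2 * k - 2 * n) (by rw [hw] at h; push_cast; linear_combination -(2 * h))
  have hne_t : ∀ n : ℤ, s + 2 * (k : ℂ) + 1 ≠ (n : ℂ) := fun n h =>
    hs (n - 2 * k - 1) (by push_cast; linear_combination h)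
  have hne_t2 : ∀ n : ℤ, (s + 2 * (k : ℂ) + 1) / 2 ≠ (n : ℂ) := fun n h =>
    hs (2 * n - 2 * k - 1) (by push_cast; linear_combination 2 * h)
  have hΓs : Complex.Gamma s ≠ 0 := hΓne s hs
  have hΓw : Complex.Gamma w ≠ 0 := hΓne w hsw
  have hΓs2 : Complex.Gamma (s / 2) ≠ 0 := hΓne _ hne_s2
  have hΓp : Complex.Gamma ((s + 1) / 2) ≠ 0 := hΓne _ hne_sp1
  have hΓq : Complex.Gamma ((w + 1) / 2) ≠ 0 := hΓne _ hne_wp1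
  have hΓt : Complex.Gamma (s + 2 * (k : ℂ) + 1) ≠ 0 := hΓne _ hne_t
  have hΓt2 : Complex.Gamma ((s + 2 * (k : ℂ) + 1) / 2) ≠ 0 := hΓne _ hne_t2
  have hτ : Complex.sin ((Real.pi : ℂ) * s) ≠ 0 := by
    intro h0
    obtain ⟨n, hn⟩ := Complex.sin_eq_zero_iff.mp h0
    exact hs n (mul_left_cancel₀ hπne (by linear_combination hn))
  have hσ : Complex.sin ((Real.pi : ℂ) * ((s + 1) / 2)) ≠ 0 := by
    intro h0
    obtain ⟨n, hn⟩ := Complex.sin_eq_zero_iff.mp h0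
    have h' : (s + 1) / 2 = (n : ℂ) := mul_left_cancel₀ hπne (by linear_combination hn)
    exact hs (2 * n - 1) (by push_cast; linear_combination 2 * h')
  -- (-1)^k facts
  have hκκ : ((-1 : ℂ)) ^ k * ((-1 : ℂ)) ^ k = 1 := by
    rw [← zpow_add₀ (by norm_num : (-1 : ℂ) ≠ 0), show k + k = 2 * k by ring, zpow_mul]
    norm_num
  have hκinv : ((-1 : ℂ)) ^ (-k) = ((-1 : ℂ)) ^ k := by
    rw [zpow_neg]
    exact inv_eq_of_mul_eq_one_left hκκ
  -- positivity for bases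
  have hApos : (0 : ℝ) < D / (Real.pi ^ (r₁ + 2 * r₂) * 4 ^ r₂) := by positivity
  have h2πpos : (0 : ℝ) < 2 * Real.pi := by positivity
  -- functional equations
  have h1 := hfe s hs
  have h2 := hfe w hsw
  rw [show (1 : ℂ) - w = s + 2 * (k : ℂ) + 1 by rw [hw]; ring] at h2
  have hB : ((D : ℂ) / ((Real.pi : ℂ) ^ (r₁ + 2 * r₂) * 4 ^ r₂)) =
      ((D / (Real.pi ^ (r₁ + 2 * r₂) * 4 ^ r₂) : ℝ) : ℂ) := by push_cast; ring
  rw [hB] at h1 h2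
  simp only [cpow_exp_log' hApos] at h1 h2
  have K := congrArg₂ (· * ·) h1 h2.symm
  -- rewrite the goal
  rw [hΛ s, hΛ w, show w + 2 * (k : ℂ) + 1 = 1 - s by rw [hw]; ring,
    show (2 * (Real.pi : ℂ)) = ((2 * Real.pi : ℝ) : ℂ) by push_cast; ring]
  simp only [cpow_exp_log' hD, cpow_exp_log' h2πpos]
  -- abbreviations for the logarithms
  have hl2prel : ((Real.log (2 * Real.pi) : ℝ) : ℂ) =
      ((Real.log 2 : ℝ) : ℂ) + ((Real.log Real.pi : ℝ) : ℂ) := by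
    rw [Real.log_mul two_ne_zero Real.pi_ne_zero]
    push_cast
    ring
  have h4 : Real.log 4 = 2 * Real.log 2 := by
    rw [show (4 : ℝ) = 2 ^ 2 by norm_num, Real.log_pow]
    push_cast
    ring
  have hlArel : ((Real.log (D / (Real.pi ^ (r₁ + 2 * r₂) * 4 ^ r₂)) : ℝ) : ℂ) =
      ((Real.log D : ℝ) : ℂ) - ((r₁ + 2 * r₂ : ℕ) : ℂ) * ((Real.log Real.pi : ℝ) : ℂ) -
        (r₂ : ℂ) * (2 * ((Real.log 2 : ℝ) : ℂ)) := by
    rw [Real.log_div hD.ne' (by positivity), Real.log_mul (by positivity) (by positivity),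
      Real.log_pow, Real.log_pow, h4]
    push_cast
    ring
  -- base-2 cpow to exp
  have h2c : ∀ z : ℂ, (2 : ℂ) ^ z = Complex.exp (((Real.log 2 : ℝ) : ℂ) * z) := by
    intro z
    rw [show (2 : ℂ) = ((2 : ℝ) : ℂ) by norm_num]
    exact cpow_exp_log' two_pos z
  -- duplication formula instances
  have d1 := Complex.Gamma_mul_Gamma_add_half (s / 2)
  rw [show s / 2 + 1 / 2 = (s + 1) / 2 by ring, show 2 * (s / 2) = s by ring, h2c] at d1
  have d2 := Complex.Gamma_mul_Gamma_add_half (w / 2)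
  rw [show w / 2 + 1 / 2 = (w + 1) / 2 by ring, show 2 * (w / 2) = w by ring, h2c,
    show Complex.exp (((Real.log 2 : ℝ) : ℂ) * (1 - w)) =
        Complex.exp (((Real.log 2 : ℝ) : ℂ) * (1 - s)) *
          Complex.exp (((Real.log 2 : ℝ) : ℂ) * (2 * s + 2 * (k : ℂ))) by
      rw [← Complex.exp_add]; congr 1; rw [hw]; ring] at d2
  -- reflection formula instances
  have g3 := Complex.Gamma_mul_Gamma_one_sub ((s + 1) / 2)
  rw [show (1 : ℂ) - (s + 1) / 2 = (1 - s) / 2 by ring] at g3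
  have e3g : Complex.Gamma ((s + 1) / 2) * Complex.Gamma ((1 - s) / 2) *
      Complex.sin ((Real.pi : ℂ) * ((s + 1) / 2)) = (Real.pi : ℂ) := by
    rw [g3, div_mul_cancel₀ _ hσ]
  have g4 := Complex.Gamma_mul_Gamma_one_sub ((w + 1) / 2)
  rw [show (1 : ℂ) - (w + 1) / 2 = (s + 2 * (k : ℂ) + 1) / 2 by rw [hw]; ring] at g4
  have hσ' : Complex.sin ((Real.pi : ℂ) * ((w + 1) / 2)) =
      ((-1 : ℂ)) ^ k * Complex.sin ((Real.pi : ℂ) * ((s + 1) / 2)) := by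
    rw [show (Real.pi : ℂ) * ((w + 1) / 2) =
        ((Real.pi : ℂ) - (Real.pi : ℂ) * ((s + 1) / 2)) + ((-k : ℤ) : ℂ) * (Real.pi : ℂ) by
      rw [hw]; push_cast; ring, sin_shift', Complex.sin_pi_sub, hκinv]
  have hσw : Complex.sin ((Real.pi : ℂ) * ((w + 1) / 2)) ≠ 0 := by
    rw [hσ']
    exact mul_ne_zero (zpow_ne_zero _ (by norm_num)) hσ
  have e4g : Complex.Gamma ((w + 1) / 2) * Complex.Gamma ((s + 2 * (k : ℂ) + 1) / 2) *
      (((-1 : ℂ)) ^ k * Complex.sin ((Real.pi : ℂ) * ((s + 1) / 2))) = (Real.pi : ℂ) := by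
    rw [← hσ', g4, div_mul_cancel₀ _ hσw]
  -- key real-place identity
  have H1 : Complex.Gamma s * Complex.Gamma ((1 - s) / 2) * Complex.Gamma (w / 2) =
      ((-1 : ℂ)) ^ k * Complex.exp (((Real.log 2 : ℝ) : ℂ) * (2 * s + 2 * (k : ℂ))) *
        (Complex.Gamma w * Complex.Gamma (s / 2) *
          Complex.Gamma ((s + 2 * (k : ℂ) + 1) / 2)) := by
    have hM : Complex.sin ((Real.pi : ℂ) * ((s + 1) / 2)) * Complex.Gamma ((s + 1) / 2) *
        Complex.Gamma ((w + 1) / 2) * Complex.exp (((Real.log 2 : ℝ) : ℂ) * (1 - s)) *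
        ((Real.sqrt Real.pi : ℝ) : ℂ) ≠ 0 :=
      mul_ne_zero (mul_ne_zero (mul_ne_zero (mul_ne_zero hσ hΓp) hΓq) (Complex.exp_ne_zero _))
        (by exact_mod_cast (Real.sqrt_ne_zero'.mpr Real.pi_pos))
    refine mul_right_cancel₀ hM ?_
    linear_combination
      ((Real.pi : ℂ) * Complex.Gamma ((s + 1) / 2) * Complex.Gamma (s / 2)) * d2 +
      (Complex.Gamma (w / 2) * Complex.Gamma (s / 2) * Complex.Gamma ((s + 1) / 2) *
        Complex.Gamma ((w + 1) / 2)) * e3g -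
      (Complex.Gamma ((1 - s) / 2) * Complex.Gamma (w / 2) *
        Complex.sin ((Real.pi : ℂ) * ((s + 1) / 2)) * Complex.Gamma ((s + 1) / 2) *
        Complex.Gamma ((w + 1) / 2)) * d1 -
      (Complex.Gamma w * Complex.Gamma (s / 2) * Complex.Gamma ((s + 1) / 2) *
        ((Real.sqrt Real.pi : ℝ) : ℂ) *
        Complex.exp (((Real.log 2 : ℝ) : ℂ) * (2 * s + 2 * (k : ℂ))) *
        Complex.exp (((Real.log 2 : ℝ) : ℂ) * (1 - s))) * e4g
  -- key complex-place identity
  have c1 := Complex.Gamma_mul_Gamma_one_sub s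
  have c2' := Complex.Gamma_mul_Gamma_one_sub w
  rw [show (1 : ℂ) - w = s + 2 * (k : ℂ) + 1 by rw [hw]; ring] at c2'
  have c5 : Complex.sin ((Real.pi : ℂ) * w) = -Complex.sin ((Real.pi : ℂ) * s) := by
    rw [show (Real.pi : ℂ) * w = -((Real.pi : ℂ) * s) + ((-(2 * k) : ℤ) : ℂ) * (Real.pi : ℂ) by
      rw [hw]; push_cast; ring, sin_shift', Complex.sin_neg,
      show (-(2 * k) : ℤ) = 2 * (-k) by ring, zpow_mul]
    norm_num
  have c1' : Complex.Gamma s * Complex.Gamma (1 - s) * Complex.sin ((Real.pi : ℂ) * s) =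
      (Real.pi : ℂ) := by rw [c1, div_mul_cancel₀ _ hτ]
  have c2'' : Complex.Gamma w * Complex.Gamma (s + 2 * (k : ℂ) + 1) *
      Complex.sin ((Real.pi : ℂ) * s) = -(Real.pi : ℂ) := by
    rw [c2', c5, div_neg, neg_mul, div_mul_cancel₀ _ hτ]
  have H2c : Complex.Gamma s * Complex.Gamma (1 - s) =
      -(Complex.Gamma w * Complex.Gamma (s + 2 * (k : ℂ) + 1)) := by
    refine mul_right_cancel₀ hτ ?_
    linear_combination c1' + c2''
  -- powered versions
  have HP1 : (Complex.Gamma s * Complex.Gamma ((1 - s) / 2) * Complex.Gamma (w / 2)) ^ r₁ =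
      (((-1 : ℂ)) ^ k) ^ r₁ *
        (Complex.exp (((Real.log 2 : ℝ) : ℂ) * (2 * s + 2 * (k : ℂ)))) ^ r₁ *
        (Complex.Gamma w * Complex.Gamma (s / 2) *
          Complex.Gamma ((s + 2 * (k : ℂ) + 1) / 2)) ^ r₁ := by
    rw [H1, mul_pow, mul_pow]
  have HP2 : (Complex.Gamma s * Complex.Gamma s * Complex.Gamma (1 - s) *
      Complex.Gamma w) ^ r₂ =
      (-1 : ℂ) ^ r₂ * (Complex.Gamma w * Complex.Gamma w *
        Complex.Gamma (s + 2 * (k : ℂ) + 1) * Complex.Gamma s) ^ r₂ := by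
    rw [show Complex.Gamma s * Complex.Gamma s * Complex.Gamma (1 - s) * Complex.Gamma w =
        (Complex.Gamma s * Complex.Gamma w) * (Complex.Gamma s * Complex.Gamma (1 - s)) by ring,
      H2c,
      show (Complex.Gamma s * Complex.Gamma w) *
          -(Complex.Gamma w * Complex.Gamma (s + 2 * (k : ℂ) + 1)) =
        (-1) * (Complex.Gamma w * Complex.Gamma w * Complex.Gamma (s + 2 * (k : ℂ) + 1) *
          Complex.Gamma s) by ring, mul_pow]
  -- sign bookkeeping
  have hεl : (((-1 : ℂ)) ^ k) ^ r₁ * (-1 : ℂ) ^ r₂ = (-1 : ℂ) ^ (k * (r₁ : ℤ) + (r₂ : ℤ)) := by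
    rw [zpow_add₀ (by norm_num : (-1 : ℂ) ≠ 0), zpow_mul, zpow_natCast, zpow_natCast]
  -- scalar (exponential) identity
  have hexp : Complex.exp (((Real.log D : ℝ) : ℂ) * s) *
      Complex.exp (((Real.log (2 * Real.pi) : ℝ) : ℂ) * (-((r₁ + 2 * r₂ : ℕ) : ℂ) * s)) *
      Complex.exp (((Real.log (D / (Real.pi ^ (r₁ + 2 * r₂) * 4 ^ r₂)) : ℝ) : ℂ) *
        ((1 - s) / 2)) *
      Complex.exp (((Real.log (D / (Real.pi ^ (r₁ + 2 * r₂) * 4 ^ r₂)) : ℝ) : ℂ) * (w / 2)) *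
      Complex.exp ((r₁ : ℂ) * (((Real.log 2 : ℝ) : ℂ) * (2 * s + 2 * (k : ℂ)))) =
      Complex.exp (((Real.log D : ℝ) : ℂ) * w) *
      Complex.exp (((Real.log (2 * Real.pi) : ℝ) : ℂ) * (-((r₁ + 2 * r₂ : ℕ) : ℂ) * w)) *
      Complex.exp (((Real.log (D / (Real.pi ^ (r₁ + 2 * r₂) * 4 ^ r₂)) : ℝ) : ℂ) * (s / 2)) *
      Complex.exp (((Real.log (D / (Real.pi ^ (r₁ + 2 * r₂) * 4 ^ r₂)) : ℝ) : ℂ) *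
        ((s + 2 * (k : ℂ) + 1) / 2)) := by
    rw [← Complex.exp_add, ← Complex.exp_add, ← Complex.exp_add, ← Complex.exp_add,
      ← Complex.exp_add, ← Complex.exp_add, ← Complex.exp_add]
    congr 1
    rw [hlArel, hl2prel, hw]
    push_cast
    ring
  have SC : Complex.exp (((Real.log D : ℝ) : ℂ) * s) *
      Complex.exp (((Real.log (2 * Real.pi) : ℝ) : ℂ) * (-((r₁ + 2 * r₂ : ℕ) : ℂ) * s)) *
      Complex.exp (((Real.log (D / (Real.pi ^ (r₁ + 2 * r₂) * 4 ^ r₂)) : ℝ) : ℂ) *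
        ((1 - s) / 2)) *
      Complex.exp (((Real.log (D / (Real.pi ^ (r₁ + 2 * r₂) * 4 ^ r₂)) : ℝ) : ℂ) * (w / 2)) *
      (((-1 : ℂ)) ^ k) ^ r₁ *
      (Complex.exp (((Real.log 2 : ℝ) : ℂ) * (2 * s + 2 * (k : ℂ)))) ^ r₁ *
      (-1 : ℂ) ^ r₂ =
      (-1 : ℂ) ^ (k * (r₁ : ℤ) + (r₂ : ℤ)) *
      (Complex.exp (((Real.log D : ℝ) : ℂ) * w) *
       Complex.exp (((Real.log (2 * Real.pi) : ℝ) : ℂ) * (-((r₁ + 2 * r₂ : ℕ) : ℂ) * w)) *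
       Complex.exp (((Real.log (D / (Real.pi ^ (r₁ + 2 * r₂) * 4 ^ r₂)) : ℝ) : ℂ) * (s / 2)) *
       Complex.exp (((Real.log (D / (Real.pi ^ (r₁ + 2 * r₂) * 4 ^ r₂)) : ℝ) : ℂ) *
         ((s + 2 * (k : ℂ) + 1) / 2))) := by
    rw [← Complex.exp_nat_mul]
    linear_combination ((((-1 : ℂ)) ^ k) ^ r₁ * (-1 : ℂ) ^ r₂) * hexp +
      (Complex.exp (((Real.log D : ℝ) : ℂ) * w) *
       Complex.exp (((Real.log (2 * Real.pi) : ℝ) : ℂ) * (-((r₁ + 2 * r₂ : ℕ) : ℂ) * w)) *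
       Complex.exp (((Real.log (D / (Real.pi ^ (r₁ + 2 * r₂) * 4 ^ r₂)) : ℝ) : ℂ) * (s / 2)) *
       Complex.exp (((Real.log (D / (Real.pi ^ (r₁ + 2 * r₂) * 4 ^ r₂)) : ℝ) : ℂ) *
         ((s + 2 * (k : ℂ) + 1) / 2))) * hεl
  -- main scalar identity S
  have S : Complex.exp (((Real.log D : ℝ) : ℂ) * s) *
      Complex.exp (((Real.log (2 * Real.pi) : ℝ) : ℂ) * (-((r₁ + 2 * r₂ : ℕ) : ℂ) * s)) *
      Complex.Gamma s ^ (r₁ + 2 * r₂) *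
      (Complex.exp (((Real.log (D / (Real.pi ^ (r₁ + 2 * r₂) * 4 ^ r₂)) : ℝ) : ℂ) *
          ((1 - s) / 2)) *
        Complex.Gamma ((1 - s) / 2) ^ r₁ * Complex.Gamma (1 - s) ^ r₂ *
        (Complex.exp (((Real.log (D / (Real.pi ^ (r₁ + 2 * r₂) * 4 ^ r₂)) : ℝ) : ℂ) * (w / 2)) *
          Complex.Gamma (w / 2) ^ r₁ * Complex.Gamma w ^ r₂)) =
      (-1 : ℂ) ^ (k * (r₁ : ℤ) + (r₂ : ℤ)) *
      (Complex.exp (((Real.log D : ℝ) : ℂ) * w) *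
       Complex.exp (((Real.log (2 * Real.pi) : ℝ) : ℂ) * (-((r₁ + 2 * r₂ : ℕ) : ℂ) * w)) *
       Complex.Gamma w ^ (r₁ + 2 * r₂) *
       (Complex.exp (((Real.log (D / (Real.pi ^ (r₁ + 2 * r₂) * 4 ^ r₂)) : ℝ) : ℂ) * (s / 2)) *
         Complex.Gamma (s / 2) ^ r₁ * Complex.Gamma s ^ r₂ *
         (Complex.exp (((Real.log (D / (Real.pi ^ (r₁ + 2 * r₂) * 4 ^ r₂)) : ℝ) : ℂ) *
             ((s + 2 * (k : ℂ) + 1) / 2)) *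
           Complex.Gamma ((s + 2 * (k : ℂ) + 1) / 2) ^ r₁ *
           Complex.Gamma (s + 2 * (k : ℂ) + 1) ^ r₂))) := by
    linear_combination
      (Complex.exp (((Real.log D : ℝ) : ℂ) * s) *
        Complex.exp (((Real.log (2 * Real.pi) : ℝ) : ℂ) * (-((r₁ + 2 * r₂ : ℕ) : ℂ) * s)) *
        Complex.exp (((Real.log (D / (Real.pi ^ (r₁ + 2 * r₂) * 4 ^ r₂)) : ℝ) : ℂ) *
          ((1 - s) / 2)) *
        Complex.exp (((Real.log (D / (Real.pi ^ (r₁ + 2 * r₂) * 4 ^ r₂)) : ℝ) : ℂ) * (w / 2)) *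
        (Complex.Gamma s * Complex.Gamma s * Complex.Gamma (1 - s) *
          Complex.Gamma w) ^ r₂) * HP1 +
      (Complex.exp (((Real.log D : ℝ) : ℂ) * s) *
        Complex.exp (((Real.log (2 * Real.pi) : ℝ) : ℂ) * (-((r₁ + 2 * r₂ : ℕ) : ℂ) * s)) *
        Complex.exp (((Real.log (D / (Real.pi ^ (r₁ + 2 * r₂) * 4 ^ r₂)) : ℝ) : ℂ) *
          ((1 - s) / 2)) *
        Complex.exp (((Real.log (D / (Real.pi ^ (r₁ + 2 * r₂) * 4 ^ r₂)) : ℝ) : ℂ) * (w / 2)) *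
        (((-1 : ℂ)) ^ k) ^ r₁ *
        (Complex.exp (((Real.log 2 : ℝ) : ℂ) * (2 * s + 2 * (k : ℂ)))) ^ r₁ *
        (Complex.Gamma w * Complex.Gamma (s / 2) *
          Complex.Gamma ((s + 2 * (k : ℂ) + 1) / 2)) ^ r₁) * HP2 +
      ((Complex.Gamma w * Complex.Gamma (s / 2) *
          Complex.Gamma ((s + 2 * (k : ℂ) + 1) / 2)) ^ r₁ *
        (Complex.Gamma w * Complex.Gamma w * Complex.Gamma (s + 2 * (k : ℂ) + 1) *
          Complex.Gamma s) ^ r₂) * SC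
  -- conclude
  have hPQ : (Complex.exp (((Real.log (D / (Real.pi ^ (r₁ + 2 * r₂) * 4 ^ r₂)) : ℝ) : ℂ) *
        (s / 2)) * Complex.Gamma (s / 2) ^ r₁ * Complex.Gamma s ^ r₂) *
      (Complex.exp (((Real.log (D / (Real.pi ^ (r₁ + 2 * r₂) * 4 ^ r₂)) : ℝ) : ℂ) *
        ((s + 2 * (k : ℂ) + 1) / 2)) * Complex.Gamma ((s + 2 * (k : ℂ) + 1) / 2) ^ r₁ *
        Complex.Gamma (s + 2 * (k : ℂ) + 1) ^ r₂) ≠ 0 :=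
    mul_ne_zero
      (mul_ne_zero (mul_ne_zero (Complex.exp_ne_zero _) (pow_ne_zero _ hΓs2))
        (pow_ne_zero _ hΓs))
      (mul_ne_zero (mul_ne_zero (Complex.exp_ne_zero _) (pow_ne_zero _ hΓt2))
        (pow_ne_zero _ hΓt))
  refine mul_right_cancel₀ hPQ ?_
  linear_combination
    (Complex.exp (((Real.log D : ℝ) : ℂ) * s) *
      Complex.exp (((Real.log (2 * Real.pi) : ℝ) : ℂ) * (-((r₁ + 2 * r₂ : ℕ) : ℂ) * s)) *
      Complex.Gamma s ^ (r₁ + 2 * r₂)) * K +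
    (ζF (1 - s) * ζF w) * S
end

section
/- For the completed function Λ_k(s) = (2π)^{-s} Γ(s) ζ(s) ζ(s+2k+1) with k an integer, one has Λ_k(s) = (-1)^k Λ_k(-s - 2k) for all complex s where both sides are defined. -/
open Complex

/-- Chandrasekharan–Narasimhan identity: for `Λ_k(s) = (2π)^{-s} Γ(s) ζ(s) ζ(s+2k+1)`
with `k` an integer, `Λ_k(s) = (-1)^k Λ_k(-s-2k)` wherever both sides are defined. -/
theorem lambda_functional_equation (k : ℤ) (Λ : ℂ → ℂ)
    (hΛ : ∀ s : ℂ, Λ s = (2 * (Real.pi : ℂ)) ^ (-s) * Complex.Gamma s *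
      riemannZeta s * riemannZeta (s + 2 * k + 1))
    (s : ℂ) (hs : ∀ n : ℤ, s ≠ (n : ℂ)) :
    Λ s = (-1 : ℂ) ^ k * Λ (-s - 2 * k) := by
  have hpi : (Real.pi : ℂ) ≠ 0 := ofReal_ne_zero.mpr Real.pi_ne_zero
  have ha : (2 * (Real.pi : ℂ)) ≠ 0 := by simp [hpi]
  set w : ℂ := s + 2 * k + 1 with hw
  have hwz : ∀ n : ℤ, w ≠ (n : ℂ) := by
    intro n h
    apply hs (n - 2 * k - 1)
    push_cast
    linear_combination h
  -- hypotheses for the functional equation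
  have hs1 : ∀ n : ℕ, s ≠ -n := fun n h => hs (-n) (by push_cast at h ⊢; exact h)
  have hs2 : s ≠ 1 := by simpa using hs 1
  have hw1 : ∀ n : ℕ, w ≠ -n := fun n h => hwz (-n) (by push_cast at h ⊢; exact h)
  have hw2 : w ≠ 1 := by simpa using hwz 1
  have heq1 := riemannZeta_one_sub hs1 hs2
  have heq2 := riemannZeta_one_sub hw1 hw2
  -- reflection formula
  have hsinw : Complex.sin ((Real.pi : ℂ) * w) ≠ 0 := by
    rw [Complex.sin_ne_zero_iff]
    intro n h
    apply hwz n
    have h' : (Real.pi : ℂ) * w = (Real.pi : ℂ) * n := by rw [h]; ring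
    exact mul_left_cancel₀ hpi h' 
  have hG : Complex.Gamma w * Complex.Gamma (1 - w) * Complex.sin ((Real.pi : ℂ) * w)
      = (Real.pi : ℂ) := by
    rw [Complex.Gamma_mul_Gamma_one_sub]
    field_simp
  -- power identity
  have hpow : (2 * (Real.pi : ℂ)) ^ (s + 2 * k) * (2 * (Real.pi : ℂ)) ^ (-w) *
      (2 * (Real.pi : ℂ)) = 1 := by
    rw [← cpow_add _ _ ha]
    have : s + 2 * (k : ℂ) + -w = -1 := by rw [hw]; ring
    rw [this, cpow_neg_one]
    field_simp
  -- trig identity: (-1)^k * cos (π w / 2) = - sin (π s / 2)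
  have hc : ((-1 : ℂ) ^ k) * Complex.cos ((Real.pi : ℂ) * w / 2)
      = - Complex.sin ((Real.pi : ℂ) * s / 2) := by
    rcases Int.even_or_odd k with ⟨m, hm⟩ | ⟨m, hm⟩
    · have h2 : (Real.pi : ℂ) * w / 2
          = ((Real.pi : ℂ) * s / 2 + (Real.pi : ℂ) / 2) + (m : ℤ) * (2 * (Real.pi : ℂ)) := by
        rw [hw, hm]; push_cast; ring
      rw [h2, Complex.cos_add_int_mul_two_pi, hm]
      have : (-1 : ℂ) ^ (m + m) = 1 := Even.neg_one_zpow ⟨m, rfl⟩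
      rw [this, one_mul]
      simp [Complex.cos_add, Complex.cos_pi_div_two, Complex.sin_pi_div_two]
    · have h2 : (Real.pi : ℂ) * w / 2
          = ((Real.pi : ℂ) * s / 2 + (Real.pi : ℂ) / 2 + (Real.pi : ℂ))
            + (m : ℤ) * (2 * (Real.pi : ℂ)) := by
        rw [hw, hm]; push_cast; ring
      rw [h2, Complex.cos_add_int_mul_two_pi, hm]
      have : (-1 : ℂ) ^ (2 * m + 1) = -1 := Odd.neg_one_zpow ⟨m, by ring⟩
      rw [this]
      simp [Complex.cos_add, Complex.sin_add, Complex.cos_pi, Complex.sin_pi,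
        Complex.cos_pi_div_two, Complex.sin_pi_div_two]
  -- sin (π w) = - sin (π s)
  have hsw : Complex.sin ((Real.pi : ℂ) * w) = - Complex.sin ((Real.pi : ℂ) * s) := by
    have h1 : (Real.pi : ℂ) * w
        = ((Real.pi : ℂ) * s + (Real.pi : ℂ)) + (k : ℤ) * (2 * (Real.pi : ℂ)) := by
      rw [hw]; ring
    rw [h1, Complex.sin_add_int_mul_two_pi]
    simp [Complex.sin_add, Complex.sin_pi, Complex.cos_pi]
  -- double angle
  have hdouble : Complex.sin ((Real.pi : ℂ) * s)
      = 2 * Complex.sin ((Real.pi : ℂ) * s / 2) * Complex.cos ((Real.pi : ℂ) * s / 2) := by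
    have h := Complex.sin_two_mul ((Real.pi : ℂ) * s / 2)
    rw [show (2 : ℂ) * ((Real.pi : ℂ) * s / 2) = (Real.pi : ℂ) * s by ring] at h
    exact h
  -- key: sin (π w) = (-1)^k * (2 * cos (π w / 2) * cos (π s / 2))
  have key : Complex.sin ((Real.pi : ℂ) * w)
      = ((-1 : ℂ) ^ k) * (2 * Complex.cos ((Real.pi : ℂ) * w / 2) *
          Complex.cos ((Real.pi : ℂ) * s / 2)) := by
    rw [hsw, hdouble]
    linear_combination (-2 * Complex.cos ((Real.pi : ℂ) * s / 2)) * hc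
  -- intermediate: 2 * (-1)^k * Γ w * Γ (1-w) * cos (π w/2) * cos (π s/2) = π
  have hGk : 2 * ((-1 : ℂ) ^ k) * Complex.Gamma w * Complex.Gamma (1 - w) *
      Complex.cos ((Real.pi : ℂ) * w / 2) * Complex.cos ((Real.pi : ℂ) * s / 2)
      = (Real.pi : ℂ) := by
    linear_combination hG + (-(Complex.Gamma w * Complex.Gamma (1 - w))) * key
  -- assemble
  have e1 : -s - 2 * (k : ℂ) = 1 - w := by rw [hw]; ring
  have e2 : -s - 2 * (k : ℂ) + 2 * k + 1 = 1 - s := by ring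
  have e3 : -(-s - 2 * (k : ℂ)) = s + 2 * k := by ring
  rw [hΛ s, hΛ (-s - 2 * k), e2, e3, e1, ← hw, heq1, heq2]
  linear_combination
    (-((2 * (Real.pi : ℂ)) ^ (-s) * Complex.Gamma s * riemannZeta s * riemannZeta w)) * hpow
    + (-(2 * (2 * (Real.pi : ℂ)) ^ (s + 2 * k) * (2 * (Real.pi : ℂ)) ^ (-w) *
        (2 * (Real.pi : ℂ)) ^ (-s) * Complex.Gamma s * riemannZeta s * riemannZeta w)) * hGk
end
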